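/- arXiv:2407.14373 — 2 statements merged into one kernel-verified Lean document; each statement's English description precedes it below -/
import Mathlib

section
/- Suppose x_a, ξ_a, ξ_b, Φ are differentiable functions of time satisfying ẋ_a = A₀(t)x_a + B₀(t)u(t) + D₀(t)θ + v(t), ξ̇_a = A₀(t)ξ_a + B₀(t)u(t) + v(t), ξ̇_b = A₀(t)ξ_b + D₀(t), and Φ̇ = A₀(t)Φ with Φ(0) = I, where θ is a constant vector. Then the error e(t) := ξ_a(t) + ξ_b(t)θ − x_a(t) satisfies ė = A₀(t)e, and consequently x_a(t) = ξ_a(t) + ξ_b(t)θ − Φ(t)e(0) for all t. -/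
open Matrix Set

/-- The linear map sending a matrix to its `mulVec` as a continuous linear map. -/
noncomputable def matCLM (n : ℕ) : Matrix (Fin n) (Fin n) ℝ →ₗ[ℝ]
    ((Fin n → ℝ) →L[ℝ] (Fin n → ℝ)) where
  toFun M := LinearMap.toContinuousLinearMap M.mulVecLin
  map_add' M N := by
    ext x i
    simp [Matrix.add_mulVec]
  map_smul' c M := by
    ext x i
    simp [Matrix.smul_mulVec]

lemma matCLM_apply {n : ℕ} (M : Matrix (Fin n) (Fin n) ℝ) (x : Fin n → ℝ) :
    matCLM n M x = M.mulVec x := rfl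

/-- Uniqueness for the linear ODE `y' = A₀(t) y` with continuous coefficient. -/
lemma lin_ode_unique {n : ℕ} (A₀ : ℝ → Matrix (Fin n) (Fin n) ℝ) (hA₀ : Continuous A₀)
    (f g : ℝ → Fin n → ℝ)
    (hf : ∀ t, HasDerivAt f ((A₀ t).mulVec (f t)) t)
    (hg : ∀ t, HasDerivAt g ((A₀ t).mulVec (g t)) t)
    (h0 : f 0 = g 0) : ∀ t, f t = g t := by
  intro t
  set R : ℝ := |t| + 1 with hRdef
  have habs : 0 ≤ |t| := abs_nonneg t
  have hR0 : (0:ℝ) < R := by positivity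
  have hRR : (-R : ℝ) ≤ R := by linarith
  have hcont : Continuous fun s => ‖matCLM n (A₀ s)‖ :=
    continuous_norm.comp ((matCLM n).continuous_of_finiteDimensional.comp hA₀)
  obtain ⟨s₀, hs₀, hmax⟩ := isCompact_Icc.exists_isMaxOn (nonempty_Icc.mpr hRR)
    hcont.continuousOn
  set K : NNReal := ‖matCLM n (A₀ s₀)‖₊ with hKdef
  have hK : ∀ s ∈ Icc (-R) R, LipschitzWith K (fun x => (A₀ s).mulVec x) := by
    intro s hs
    have hle : ‖matCLM n (A₀ s)‖₊ ≤ K := hmax hs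
    have := (matCLM n (A₀ s)).lipschitz.weaken hle
    exact this
  set w : ℝ → (Fin n → ℝ) → (Fin n → ℝ) :=
    fun s x => (A₀ ((projIcc (-R) R hRR s : Icc (-R) R) : ℝ)).mulVec x with hwdef
  have hw : ∀ s, LipschitzOnWith K (w s) univ :=
    fun s => ((hK _ (projIcc (-R) R hRR s).2)).lipschitzOnWith
  have hmem : ∀ s ∈ Ioo (-R) R, ((projIcc (-R) R hRR s : Icc (-R) R) : ℝ) = s := by
    intro s hs
    rw [projIcc_of_mem hRR (Ioo_subset_Icc_self hs)]
  have hf' : ∀ s ∈ Ioo (-R) R, HasDerivAt f (w s (f s)) s := by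
    intro s hs
    have := hf s
    simpa only [hwdef, hmem s hs] using this
  have hg' : ∀ s ∈ Ioo (-R) R, HasDerivAt g (w s (g s)) s := by
    intro s hs
    have := hg s
    simpa only [hwdef, hmem s hs] using this
  have h0mem : (0:ℝ) ∈ Ioo (-R) R := ⟨by linarith, by linarith⟩
  have heq : EqOn f g (Icc (-R) R) :=
    ODE_solution_unique_of_mem_Icc (fun s _ => hw s) h0mem
      (fun s _ => (hf s).continuousAt.continuousWithinAt) hf' (fun _ _ => mem_univ _)
      (fun s _ => (hg s).continuousAt.continuousWithinAt) hg' (fun _ _ => mem_univ _) h0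
  exact heq ⟨by cases abs_cases t <;> linarith, by cases abs_cases t <;> linarith⟩

/-- GPEBO construction. The error `e := ξ_a + ξ_b θ − x_a` obeys the
homogeneous equation `ė = A₀(t) e`, hence `x_a(t) = ξ_a(t) + ξ_b(t) θ − Φ(t) e(0)`. -/
theorem gpebo_error_dynamics
    (n q : ℕ)
    (A₀ : ℝ → Matrix (Fin n) (Fin n) ℝ) (hA₀ : Continuous A₀)
    (B₀ : ℝ → Matrix (Fin n) (Fin n) ℝ) (D₀ : ℝ → Matrix (Fin n) (Fin q) ℝ)
    (u : ℝ → Fin n → ℝ) (v : ℝ → Fin n → ℝ) (θ : Fin q → ℝ)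
    (xa ξa : ℝ → Fin n → ℝ)
    (ξb : ℝ → Matrix (Fin n) (Fin q) ℝ) (Φ : ℝ → Matrix (Fin n) (Fin n) ℝ)
    (hxa : ∀ t : ℝ, HasDerivAt xa
      ((A₀ t).mulVec (xa t) + (B₀ t).mulVec (u t) + (D₀ t).mulVec θ + v t) t)
    (hξa : ∀ t : ℝ, HasDerivAt ξa
      ((A₀ t).mulVec (ξa t) + (B₀ t).mulVec (u t) + v t) t)
    (hξb : ∀ (t : ℝ) (i : Fin n) (j : Fin q),
      HasDerivAt (fun s => ξb s i j) ((A₀ t * ξb t + D₀ t) i j) t)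
    (hΦ : ∀ (t : ℝ) (i j : Fin n),
      HasDerivAt (fun s => Φ s i j) ((A₀ t * Φ t) i j) t)
    (hΦ0 : Φ 0 = 1) :
    (∀ t : ℝ, HasDerivAt (fun s => ξa s + (ξb s).mulVec θ - xa s)
      ((A₀ t).mulVec (ξa t + (ξb t).mulVec θ - xa t)) t) ∧
    (∀ t : ℝ, xa t = ξa t + (ξb t).mulVec θ
      - (Φ t).mulVec (ξa 0 + (ξb 0).mulVec θ - xa 0)) := by
  have he : ∀ t : ℝ, HasDerivAt (fun s => ξa s + (ξb s).mulVec θ - xa s)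
      ((A₀ t).mulVec (ξa t + (ξb t).mulVec θ - xa t)) t := by
    intro t
    rw [hasDerivAt_pi]
    intro i
    have h1 := hasDerivAt_pi.1 (hξa t) i
    have h3 := hasDerivAt_pi.1 (hxa t) i
    have h2 : HasDerivAt (fun s => ∑ j, ξb s i j * θ j)
        (∑ j, (A₀ t * ξb t + D₀ t) i j * θ j) t :=
      HasDerivAt.fun_sum fun j _ => (hξb t i j).mul_const (θ j)
    have hcomp : (fun s => (ξa s + (ξb s).mulVec θ - xa s) i)
        = fun s => ξa s i + (∑ j, ξb s i j * θ j) - xa s i := by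
      funext s
      simp [Matrix.mulVec, dotProduct]
    rw [hcomp]
    refine ((h1.add h2).sub h3).congr_deriv ?_
    symm
    have hrfl : (∑ j, (A₀ t * ξb t + D₀ t) i j * θ j)
        = ((A₀ t * ξb t + D₀ t).mulVec θ) i := rfl
    rw [hrfl]
    simp only [Matrix.mulVec_sub, Matrix.mulVec_add, Matrix.add_mulVec,
      Matrix.mulVec_mulVec, Pi.add_apply, Pi.sub_apply]
    ring
  refine ⟨he, ?_⟩
  set e : ℝ → Fin n → ℝ := fun s => ξa s + (ξb s).mulVec θ - xa s with hedef
  have hg : ∀ t : ℝ, HasDerivAt (fun s => (Φ s).mulVec (e 0))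
      ((A₀ t).mulVec ((Φ t).mulVec (e 0))) t := by
    intro t
    rw [hasDerivAt_pi]
    intro i
    have h2 : HasDerivAt (fun s => ∑ j, Φ s i j * e 0 j)
        (∑ j, (A₀ t * Φ t) i j * e 0 j) t :=
      HasDerivAt.fun_sum fun j _ => (hΦ t i j).mul_const (e 0 j)
    have hcomp : (fun s => (Φ s).mulVec (e 0) i) = fun s => ∑ j, Φ s i j * e 0 j := by
      funext s
      simp [Matrix.mulVec, dotProduct]
    rw [hcomp]
    refine h2.congr_deriv ?_
    symm
    rw [Matrix.mulVec_mulVec]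
    simp [Matrix.mulVec, dotProduct]
  have h0 : e 0 = (Φ 0).mulVec (e 0) := by
    rw [hΦ0, Matrix.one_mulVec]
  have huniq := lin_ode_unique A₀ hA₀ e (fun s => (Φ s).mulVec (e 0)) he hg h0
  intro t
  have h := huniq t
  have : ξa t + (ξb t).mulVec θ - xa t = (Φ t).mulVec (ξa 0 + (ξb 0).mulVec θ - xa 0) := h
  rw [← this]
  abel
end

section
/- For the time-invariant case: let a₁, C_{w,1}, C_{w,2} be nonzero constants with a₁·C_{w,1}/C_{w,2} < 0, and choose L_w = a₁ C_{w,1} (C_{w,1}/C_{w,2}, 1)ᵀ. Then the constant matrix M_w with entries M₁₁ = L_{w,1}C_{w,1}, M₁₂ = L_{w,1}C_{w,2} − a₁, M₂₁ = L_{w,2}C_{w,1}, M₂₂ = L_{w,2}C_{w,2} + C_{w,1}a₁/C_{w,2} is Hurwitz (all eigenvalues have negative real part). -/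
open Matrix

/-- LTI case. With `L_w = a₁ C_{w,1} (C_{w,1}/C_{w,2}, 1)ᵀ` and
`a₁ C_{w,1}/C_{w,2} < 0`, the constant observer error matrix `M_w` is Hurwitz. -/
theorem LTI_Mw_Hurwitz
    (a₁ c₁ c₂ : ℝ) (hc₁ : c₁ ≠ 0) (hc₂ : c₂ ≠ 0)
    (hsign : a₁ * c₁ / c₂ < 0)
    (l₁ l₂ : ℝ) (hl₁ : l₁ = a₁ * c₁ * (c₁ / c₂)) (hl₂ : l₂ = a₁ * c₁)
    (Mw : Matrix (Fin 2) (Fin 2) ℝ)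
    (hMw : Mw = !![l₁ * c₁, l₁ * c₂ - a₁;
                   l₂ * c₁, l₂ * c₂ + c₁ * a₁ / c₂]) :
    ∀ μ ∈ spectrum ℂ (Mw.map (Complex.ofReal)), μ.re < 0 := by
  intro μ hμ
  set κ : ℝ := a₁ * c₁ / c₂ with hκ
  -- trace and determinant
  set t : ℝ := κ * (1 + c₁ ^ 2 + c₂ ^ 2) with ht
  set d : ℝ := κ ^ 2 * (c₁ ^ 2 + c₂ ^ 2) with hd
  have hκ0 : κ < 0 := hsign
  have htneg : t < 0 := by
    have h1 : (0:ℝ) < 1 + c₁ ^ 2 + c₂ ^ 2 := by positivity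
    exact mul_neg_of_neg_of_pos hκ0 h1
  have hdpos : 0 < d := by
    have h1 : (0:ℝ) < c₁ ^ 2 + c₂ ^ 2 := by positivity
    have h2 : (0:ℝ) < κ ^ 2 := pow_two_pos_of_ne_zero hκ0.ne
    exact mul_pos h2 h1
  -- det equation from the spectrum
  rw [spectrum.mem_iff] at hμ
  rw [Matrix.isUnit_iff_isUnit_det, isUnit_iff_ne_zero, not_ne_iff] at hμ
  have hmap : Mw.map Complex.ofReal =
      !![((l₁ * c₁ : ℝ) : ℂ), ((l₁ * c₂ - a₁ : ℝ) : ℂ);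
         ((l₂ * c₁ : ℝ) : ℂ), ((l₂ * c₂ + c₁ * a₁ / c₂ : ℝ) : ℂ)] := by
    ext i j
    fin_cases i <;> fin_cases j <;> simp [hMw]
  have hroot : μ ^ 2 - (t : ℂ) * μ + (d : ℂ) = 0 := by
    have hdet := hμ
    rw [hmap] at hdet
    have hμ1 : (algebraMap ℂ (Matrix (Fin 2) (Fin 2) ℂ)) μ = μ • (1 : Matrix (Fin 2) (Fin 2) ℂ) :=
      Algebra.algebraMap_eq_smul_one μ
    rw [hμ1] at hdet
    have h1 : (1 : Matrix (Fin 2) (Fin 2) ℂ) = !![1, 0; 0, 1] := by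
      ext i j; fin_cases i <;> fin_cases j <;> simp
    rw [h1] at hdet
    rw [show (μ • !![(1:ℂ), 0; 0, 1] -
      !![((l₁ * c₁ : ℝ) : ℂ), ((l₁ * c₂ - a₁ : ℝ) : ℂ);
         ((l₂ * c₁ : ℝ) : ℂ), ((l₂ * c₂ + c₁ * a₁ / c₂ : ℝ) : ℂ)]) =
      !![μ - (l₁ * c₁ : ℝ), -((l₁ * c₂ - a₁ : ℝ) : ℂ);
         -((l₂ * c₁ : ℝ) : ℂ), μ - ((l₂ * c₂ + c₁ * a₁ / c₂ : ℝ) : ℂ)] from by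
      ext i j; fin_cases i <;> fin_cases j <;> simp] at hdet
    rw [Matrix.det_fin_two_of] at hdet
    have hc₁' : (c₁ : ℂ) ≠ 0 := by exact_mod_cast hc₁
    have hc₂' : (c₂ : ℂ) ≠ 0 := by exact_mod_cast hc₂
    rw [ht, hd, hκ]
    push_cast
    rw [hl₁, hl₂] at hdet
    push_cast at hdet
    field_simp at hdet ⊢
    ring_nf at hdet ⊢
    linear_combination hdet
  -- split into real and imaginary parts
  have him : μ.im * (2 * μ.re - t) = 0 := by
    have := congrArg Complex.im hroot
    simp [Complex.ext_iff, pow_two, Complex.mul_im, Complex.mul_re] at this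
    ring_nf at this ⊢
    linarith [this]
  have hre : μ.re ^ 2 - μ.im ^ 2 - t * μ.re + d = 0 := by
    have := congrArg Complex.re hroot
    simp [Complex.ext_iff, pow_two, Complex.mul_im, Complex.mul_re] at this
    ring_nf at this ⊢
    linarith [this]
  rcases mul_eq_zero.mp him with hy | hx
  · -- imaginary part zero: real root of x² - t x + d = 0
    rw [hy] at hre
    nlinarith [sq_nonneg μ.re, hre]
  · -- 2 re μ = t
    have : μ.re = t / 2 := by linarith
    rw [this]
    linarith
end
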